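/- Let x₁, x₂, x₃ and e₁, e₂, e₃ and c be real numbers with e₁ ≤ e₂ ≤ e₃. Then inf_{γ∈[0,1]} |x₂ − (1−γ)x₁ − γx₃| ≤ |(x₁ + c·e₁) − (x₂ + c·e₂)| + |(x₂ + c·e₂) − (x₃ + c·e₃)|. -/

import Mathlib

/-- M1-oscillation decomposition: for `e₁ ≤ e₂ ≤ e₃`,
`inf_{γ∈[0,1]} |x₂ − (1−γ)x₁ − γx₃| ≤ |(x₁+ce₁) − (x₂+ce₂)| + |(x₂+ce₂) − (x₃+ce₃)|`. -/
theorem m1_oscillation_decomposition (x₁ x₂ x₃ e₁ e₂ e₃ c : ℝ)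
    (h12 : e₁ ≤ e₂) (h23 : e₂ ≤ e₃) :
    sInf ((fun γ : ℝ => |x₂ - (1 - γ) * x₁ - γ * x₃|) '' Set.Icc 0 1) ≤
      |(x₁ + c * e₁) - (x₂ + c * e₂)| + |(x₂ + c * e₂) - (x₃ + c * e₃)| := by
  have hbdd : BddBelow ((fun γ : ℝ => |x₂ - (1 - γ) * x₁ - γ * x₃|) '' Set.Icc 0 1) := by
    refine ⟨0, ?_⟩
    rintro y ⟨γ, _, rfl⟩
    exact abs_nonneg _
  have key : ∀ γ ∈ Set.Icc (0:ℝ) 1,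
      sInf ((fun γ : ℝ => |x₂ - (1 - γ) * x₁ - γ * x₃|) '' Set.Icc 0 1) ≤
        |x₂ - (1 - γ) * x₁ - γ * x₃| := fun γ hγ =>
    csInf_le hbdd ⟨γ, hγ, rfl⟩
  by_cases h13 : e₁ = e₃
  · have he12 : e₁ = e₂ := le_antisymm h12 (h13 ▸ h23)
    calc sInf _ ≤ |x₂ - (1 - 0) * x₁ - 0 * x₃| := key 0 (by norm_num)
      _ = |x₁ + c * e₁ - (x₂ + c * e₂)| := by rw [← he12]; rw [abs_sub_comm]; ring_nf
      _ ≤ _ := le_add_of_nonneg_right (abs_nonneg _)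
  · have hlt : e₁ < e₃ := lt_of_le_of_ne (h12.trans h23) h13
    set γ : ℝ := (e₂ - e₁) / (e₃ - e₁) with hγdef
    have hpos : 0 < e₃ - e₁ := sub_pos.mpr hlt
    have hγ0 : 0 ≤ γ := div_nonneg (sub_nonneg.mpr h12) hpos.le
    have hγ1 : γ ≤ 1 := (div_le_one hpos).mpr (by linarith)
    have he : e₂ - (1 - γ) * e₁ - γ * e₃ = 0 := by
      field_simp [hγdef]
      have hm : γ * (e₃ - e₁) = e₂ - e₁ := by rw [hγdef]; exact div_mul_cancel₀ _ hpos.ne'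
      linarith
    calc sInf _ ≤ |x₂ - (1 - γ) * x₁ - γ * x₃| := key γ ⟨hγ0, hγ1⟩
      _ = |(x₂ + c * e₂) - (1 - γ) * (x₁ + c * e₁) - γ * (x₃ + c * e₃)| := by
          congr 1
          have : c * (e₂ - (1 - γ) * e₁ - γ * e₃) = 0 := by rw [he]; ring
          nlinarith [this]
      _ = |(1 - γ) * ((x₂ + c * e₂) - (x₁ + c * e₁)) + γ * ((x₂ + c * e₂) - (x₃ + c * e₃))| := by
          congr 1; ring
      _ ≤ (1 - γ) * |(x₂ + c * e₂) - (x₁ + c * e₁)| + γ * |(x₂ + c * e₂) - (x₃ + c * e₃)| := by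
          refine (abs_add_le _ _).trans ?_
          rw [abs_mul, abs_mul, abs_of_nonneg (by linarith), abs_of_nonneg hγ0]
      _ ≤ |(x₁ + c * e₁) - (x₂ + c * e₂)| + |(x₂ + c * e₂) - (x₃ + c * e₃)| := by
          rw [abs_sub_comm (x₂ + c * e₂)]
          nlinarith [abs_nonneg ((x₁ + c * e₁) - (x₂ + c * e₂)),
            abs_nonneg ((x₂ + c * e₂) - (x₃ + c * e₃))]
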